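/- The isentropic vortex satisfies the steady energy equation: with the fields ρ, u, v, p defined below and total energy density ρE = p/(γ−1) + ρ(u²+v²)/2, at every point (x,y) ∈ ℝ² one has ∂_x(u(ρE + p)) + ∂_y(v(ρE + p)) = 0. -/

import Mathlib

open Real

/-- Squared distance from the vortex center `(5,5)`. -/
noncomputable def vortexR2 (x y : ℝ) : ℝ := (x - 5)^2 + (y - 5)^2

/-- Temperature perturbation `δT` of the isentropic (Hu–Shu) vortex. -/
noncomputable def vortexDT (γ ε x y : ℝ) : ℝ :=
  -((γ - 1) * ε^2 / (8 * γ * π^2)) * exp (1 - vortexR2 x y)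

/-- Density `ρ = (1+δT)^{1/(γ−1)}` of the isentropic vortex. -/
noncomputable def vortexRho (γ ε x y : ℝ) : ℝ :=
  (1 + vortexDT γ ε x y) ^ (1 / (γ - 1))

/-- Pressure `p = (1+δT)^{γ/(γ−1)}` of the isentropic vortex. -/
noncomputable def vortexP (γ ε x y : ℝ) : ℝ :=
  (1 + vortexDT γ ε x y) ^ (γ / (γ - 1))

/-- `x`-velocity `u` of the isentropic vortex. -/
noncomputable def vortexU (ε x y : ℝ) : ℝ :=
  -(ε / (2 * π)) * exp ((1 - vortexR2 x y) / 2) * (y - 5)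

/-- `y`-velocity `v` of the isentropic vortex. -/
noncomputable def vortexV (ε x y : ℝ) : ℝ :=
  (ε / (2 * π)) * exp ((1 - vortexR2 x y) / 2) * (x - 5)

/-- Total energy density `ρE = p/(γ−1) + ρ(u²+v²)/2` of the isentropic vortex
(ideal-gas equation of state). -/
noncomputable def vortexRhoE (γ ε x y : ℝ) : ℝ :=
  vortexP γ ε x y / (γ - 1)
    + vortexRho γ ε x y * ((vortexU ε x y)^2 + (vortexV ε x y)^2) / 2

/-- Temperature perturbation as a function of the squared radius. -/
noncomputable def vdTs (γ ε s : ℝ) : ℝ :=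
  -((γ - 1) * ε^2 / (8 * γ * π^2)) * exp (1 - s)

/-- `ρE + p` as a function of the squared radius. -/
noncomputable def vEs (γ ε s : ℝ) : ℝ :=
  (1 + vdTs γ ε s) ^ (γ / (γ - 1)) * (γ / (γ - 1))
    + (1 + vdTs γ ε s) ^ (1 / (γ - 1)) * ((ε / (2 * π))^2 * exp (1 - s) * s) / 2

/-- The radial profile of the energy flux. -/
noncomputable def vPhi (γ ε s : ℝ) : ℝ :=
  (ε / (2 * π)) * exp ((1 - s) / 2) * vEs γ ε s

lemma vortex_keyU (γ ε x y : ℝ) (hγ : γ - 1 ≠ 0) :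
    vortexU ε x y * (vortexRhoE γ ε x y + vortexP γ ε x y)
      = -(vPhi γ ε (vortexR2 x y)) * (y - 5) := by
  have hπ : (π : ℝ) ≠ 0 := pi_ne_zero
  simp only [vortexU, vortexRhoE, vortexP, vortexRho, vortexV, vortexDT, vPhi, vEs, vdTs,
    vortexR2]
  have hexp : exp (1 - ((x - 5)^2 + (y - 5)^2))
      = exp ((1 - ((x - 5)^2 + (y - 5)^2)) / 2) * exp ((1 - ((x - 5)^2 + (y - 5)^2)) / 2) := by
    rw [← exp_add]; ring_nf
  set a := exp ((1 - ((x - 5)^2 + (y - 5)^2)) / 2) with ha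
  set b := 1 + -((γ - 1) * ε ^ 2 / (8 * γ * π ^ 2)) * exp (1 - ((x - 5) ^ 2 + (y - 5) ^ 2)) with hb
  set A := b ^ (γ / (γ - 1)) with hA
  set B := b ^ (1 / (γ - 1)) with hB
  rw [hexp]
  field_simp
  ring

lemma vortex_keyV (γ ε x y : ℝ) (hγ : γ - 1 ≠ 0) :
    vortexV ε x y * (vortexRhoE γ ε x y + vortexP γ ε x y)
      = vPhi γ ε (vortexR2 x y) * (x - 5) := by
  have hπ : (π : ℝ) ≠ 0 := pi_ne_zero
  simp only [vortexU, vortexRhoE, vortexP, vortexRho, vortexV, vortexDT, vPhi, vEs, vdTs,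
    vortexR2]
  have hexp : exp (1 - ((x - 5)^2 + (y - 5)^2))
      = exp ((1 - ((x - 5)^2 + (y - 5)^2)) / 2) * exp ((1 - ((x - 5)^2 + (y - 5)^2)) / 2) := by
    rw [← exp_add]; ring_nf
  set a := exp ((1 - ((x - 5)^2 + (y - 5)^2)) / 2) with ha
  set b := 1 + -((γ - 1) * ε ^ 2 / (8 * γ * π ^ 2)) * exp (1 - ((x - 5) ^ 2 + (y - 5) ^ 2)) with hb
  set A := b ^ (γ / (γ - 1)) with hA
  set B := b ^ (1 / (γ - 1)) with hB
  rw [hexp]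
  field_simp
  ring

lemma vPhi_differentiableAt (γ ε s₀ : ℝ) (hne : 1 + vdTs γ ε s₀ ≠ 0) :
    DifferentiableAt ℝ (vPhi γ ε) s₀ := by
  have hbase : DifferentiableAt ℝ (fun s => 1 + vdTs γ ε s) s₀ := by
    simp only [vdTs]; fun_prop
  have hA : DifferentiableAt ℝ (fun s => (1 + vdTs γ ε s) ^ (γ / (γ - 1))) s₀ :=
    hbase.rpow_const (Or.inl hne)
  have hB : DifferentiableAt ℝ (fun s => (1 + vdTs γ ε s) ^ (1 / (γ - 1))) s₀ :=
    hbase.rpow_const (Or.inl hne)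
  have hE : DifferentiableAt ℝ (vEs γ ε) s₀ := by
    unfold vEs
    exact (hA.mul_const _).add
      ((hB.mul (by fun_prop)).div_const 2)
  unfold vPhi
  exact (by fun_prop : DifferentiableAt ℝ
    (fun s : ℝ => ε / (2 * π) * exp ((1 - s) / 2)) s₀).mul hE

theorem isentropic_vortex_energy (γ ε : ℝ) (hγ : 1 < γ)
    (hε : (γ - 1) * ε^2 * exp 1 < 8 * γ * π^2) (x y : ℝ) :
    deriv (fun x' => vortexU ε x' y * (vortexRhoE γ ε x' y + vortexP γ ε x' y)) x
      + deriv (fun y' => vortexV ε x y' * (vortexRhoE γ ε x y' + vortexP γ ε x y')) y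
      = 0 := by
  have hγ' : γ - 1 ≠ 0 := by linarith
  have hγ0 : (0 : ℝ) < γ := by linarith
  set s₀ := vortexR2 x y with hs₀
  -- positivity of the rpow base at s₀
  have h8 : (0 : ℝ) < 8 * γ * π^2 := by positivity
  have hk : (0 : ℝ) ≤ (γ - 1) * ε^2 / (8 * γ * π^2) :=
    div_nonneg (mul_nonneg (by linarith) (sq_nonneg _)) h8.le
  have h1 : (γ - 1) * ε^2 / (8 * γ * π^2) * exp 1 < 1 := by
    rw [div_mul_eq_mul_div, div_lt_one h8]; exact hε
  have h2 : exp (1 - s₀) ≤ exp 1 := by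
    apply exp_le_exp.mpr
    have : 0 ≤ s₀ := by
      rw [hs₀, vortexR2]; positivity
    linarith
  have hlt : (γ - 1) * ε^2 / (8 * γ * π^2) * exp (1 - s₀) < 1 :=
    lt_of_le_of_lt (mul_le_mul_of_nonneg_left h2 hk) h1
  have hpos : (0 : ℝ) < 1 + vdTs γ ε s₀ := by
    simp only [vdTs]; linarith
  have hΦdiff := vPhi_differentiableAt γ ε s₀ hpos.ne'
  set D := deriv (vPhi γ ε) s₀ with hD
  have hΦ : HasDerivAt (vPhi γ ε) D s₀ := hΦdiff.hasDerivAt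
  -- derivative of the squared radius in x and y
  have hr2x : HasDerivAt (fun x' => vortexR2 x' y) (2 * (x - 5)) x := by
    have h := (((hasDerivAt_id x).sub_const 5).pow 2).add_const ((y - 5)^2)
    have h' : HasDerivAt (fun x' : ℝ => (x' - 5)^2 + (y - 5)^2) (2 * (x - 5)) x := by
      refine h.congr_deriv ?_; simp only [id_eq]; push_cast; ring
    exact h'
  have hr2y : HasDerivAt (fun y' => vortexR2 x y') (2 * (y - 5)) y := by
    have h := (((hasDerivAt_id y).sub_const 5).pow 2).const_add ((x - 5)^2)
    have h' : HasDerivAt (fun y' : ℝ => (x - 5)^2 + (y' - 5)^2) (2 * (y - 5)) y := by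
      refine h.congr_deriv ?_; simp only [id_eq]; push_cast; ring
    exact h'
  -- derivative of the x-flux
  have hFx : HasDerivAt (fun x' => vortexU ε x' y * (vortexRhoE γ ε x' y + vortexP γ ε x' y))
      (-(D * (2 * (x - 5))) * (y - 5)) x := by
    have hcomp : HasDerivAt (fun x' => vPhi γ ε (vortexR2 x' y)) (D * (2 * (x - 5))) x :=
      by have h := hΦ.comp x hr2x; exact h
    have h := (hcomp.neg).mul_const (y - 5)
    exact h.congr_of_eventuallyEq
      (Filter.Eventually.of_forall fun t => (vortex_keyU γ ε t y hγ'))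
  have hGy : HasDerivAt (fun y' => vortexV ε x y' * (vortexRhoE γ ε x y' + vortexP γ ε x y'))
      (D * (2 * (y - 5)) * (x - 5)) y := by
    have hcomp : HasDerivAt (fun y' => vPhi γ ε (vortexR2 x y')) (D * (2 * (y - 5))) y :=
      by have h := hΦ.comp y hr2y; exact h
    have h := hcomp.mul_const (x - 5)
    exact h.congr_of_eventuallyEq
      (Filter.Eventually.of_forall fun t => (vortex_keyV γ ε x t hγ'))
  rw [hFx.deriv, hGy.deriv]
  ring
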